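/- Let K and L be distributive lattices such that L has a least element 0, let Σ be a generating subset of the lattice K, and let f : K → L be a lattice homomorphism whose range f[K] is consonant in L (every pair of elements of f[K] is consonant). If f is closed at every pair in Σ × Σ, then f is closed at every pair in K × K. -/
import Mathlib


/-- A lattice homomorphism `f` is *closed at* `(a, b)` if for every `z` with
`f a ≤ f b ⊔ z` there is `u` with `a ≤ b ⊔ u` and `f u ≤ z`. -/
def ClosedAt {K L : Type*} [Lattice K] [Lattice L] (f : LatticeHom K L) (a b : K) : Prop :=
  ∀ z : L, f a ≤ f b ⊔ z → ∃ u : K, a ≤ b ⊔ u ∧ f u ≤ z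

/-- A pair `(x, y)` in a lattice with bottom is *consonant* if it admits a splitting pair. -/
def Consonant {L : Type*} [Lattice L] [OrderBot L] (x y : L) : Prop :=
  ∃ u v : L, x ⊔ y = x ⊔ v ∧ x ⊔ y = u ⊔ y ∧ u ⊓ v = ⊥

theorem closed_of_closedAt_generators {K L : Type*} [DistribLattice K] [DistribLattice L]
    [OrderBot L] (Gen : Set K) (f : LatticeHom K L)
    (hgen : ∀ S : Sublattice K, Gen ⊆ ↑S → ∀ x : K, x ∈ S)
    (hcons : ∀ x ∈ Set.range f, ∀ y ∈ Set.range f, Consonant x y)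
    (hGen : ∀ a ∈ Gen, ∀ b ∈ Gen, ClosedAt f a b) :
    ∀ a b : K, ClosedAt f a b := by
  -- Step 1: for fixed b, the set of a with ClosedAt f a b is a sublattice.
  have key1 : ∀ b : K, (∀ g ∈ Gen, ClosedAt f g b) → ∀ a : K, ClosedAt f a b := by
    intro b hb
    have := hgen
      { carrier := {a | ClosedAt f a b}
        supClosed' := by
          intro a ha a' ha' z hz
          rw [Set.mem_setOf_eq] at ha ha'
          rw [map_sup, sup_le_iff] at hz
          obtain ⟨s, hs1, hs2⟩ := ha z hz.1
          obtain ⟨t, ht1, ht2⟩ := ha' z hz.2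
          refine ⟨s ⊔ t, ?_, ?_⟩
          · calc a ⊔ a' ≤ (b ⊔ s) ⊔ (b ⊔ t) := sup_le_sup hs1 ht1
              _ = b ⊔ (s ⊔ t) := by rw [sup_sup_sup_comm, sup_idem]
          · rw [map_sup]; exact sup_le hs2 ht2
        infClosed' := by
          intro a ha a' ha' z hz
          rw [Set.mem_setOf_eq] at ha ha'
          rw [map_inf] at hz
          obtain ⟨u₀, v₀, h1, h2, h3⟩ := hcons (f a) ⟨a, rfl⟩ (f a') ⟨a', rfl⟩
          have hfa : f a ≤ f b ⊔ (z ⊔ u₀) := by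
            calc f a = f a ⊓ (u₀ ⊔ f a') := by
                  rw [← h2]; exact (inf_eq_left.mpr le_sup_left).symm
              _ = (f a ⊓ u₀) ⊔ (f a ⊓ f a') := inf_sup_left _ _ _
              _ ≤ u₀ ⊔ (f b ⊔ z) := sup_le_sup inf_le_right hz
              _ = f b ⊔ (z ⊔ u₀) := by rw [sup_comm, sup_assoc]
          have hfa' : f a' ≤ f b ⊔ (z ⊔ v₀) := by
            calc f a' = f a' ⊓ (f a ⊔ v₀) := by
                  rw [← h1]; exact (inf_eq_left.mpr le_sup_right).symm
              _ = (f a' ⊓ f a) ⊔ (f a' ⊓ v₀) := inf_sup_left _ _ _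
              _ ≤ (f b ⊔ z) ⊔ v₀ := sup_le_sup (by rw [inf_comm]; exact hz) inf_le_right
              _ = f b ⊔ (z ⊔ v₀) := by rw [sup_assoc]
          obtain ⟨s, hs1, hs2⟩ := ha _ hfa
          obtain ⟨t, ht1, ht2⟩ := ha' _ hfa'
          refine ⟨s ⊓ t, ?_, ?_⟩
          · calc a ⊓ a' ≤ (b ⊔ s) ⊓ (b ⊔ t) := inf_le_inf hs1 ht1
              _ = b ⊔ (s ⊓ t) := (sup_inf_left _ _ _).symm
          · calc f (s ⊓ t) = f s ⊓ f t := map_inf _ _ _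
              _ ≤ (z ⊔ u₀) ⊓ (z ⊔ v₀) := inf_le_inf hs2 ht2
              _ = z ⊔ (u₀ ⊓ v₀) := (sup_inf_left _ _ _).symm
              _ = z := by rw [h3, sup_bot_eq] } hb
    exact this
  -- Step 2: every a is closed at every generator b.
  have step1 : ∀ a : K, ∀ g ∈ Gen, ClosedAt f a g := by
    intro a g hg
    exact key1 g (fun g' hg' => hGen g' hg' g hg) a
  -- Step 3: for fixed a, the set of b with ClosedAt f a b is a sublattice.
  intro a b
  have := hgen
    { carrier := {b | ClosedAt f a b}
      supClosed' := by
        intro b hb b' hb' z hz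
        rw [Set.mem_setOf_eq] at hb hb'
        rw [map_sup] at hz
        obtain ⟨u₀, v₀, h1, h2, h3⟩ := hcons (f b) ⟨b, rfl⟩ (f b') ⟨b', rfl⟩
        have hfa : f a ≤ f b ⊔ (z ⊔ v₀) := by
          calc f a ≤ (f b ⊔ f b') ⊔ z := hz
            _ = (f b ⊔ v₀) ⊔ z := by rw [← h1]
            _ = f b ⊔ (z ⊔ v₀) := by rw [sup_assoc, sup_comm v₀ z]
        have hfa' : f a ≤ f b' ⊔ (z ⊔ u₀) := by
          calc f a ≤ (f b ⊔ f b') ⊔ z := hz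
            _ = (u₀ ⊔ f b') ⊔ z := by rw [← h2]
            _ = f b' ⊔ (z ⊔ u₀) := by
                rw [sup_comm u₀ (f b'), sup_assoc, sup_comm u₀ z]
        obtain ⟨s, hs1, hs2⟩ := hb _ hfa
        obtain ⟨t, ht1, ht2⟩ := hb' _ hfa'
        refine ⟨s ⊓ t, ?_, ?_⟩
        · calc a ≤ (b ⊔ s) ⊓ (b' ⊔ t) := le_inf hs1 ht1
            _ ≤ ((b ⊔ b') ⊔ s) ⊓ ((b ⊔ b') ⊔ t) :=
                inf_le_inf (sup_le_sup_right le_sup_left s)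
                  (sup_le_sup_right le_sup_right t)
            _ = (b ⊔ b') ⊔ (s ⊓ t) := (sup_inf_left _ _ _).symm
        · calc f (s ⊓ t) = f s ⊓ f t := map_inf _ _ _
            _ ≤ (z ⊔ v₀) ⊓ (z ⊔ u₀) := inf_le_inf hs2 ht2
            _ = z ⊔ (v₀ ⊓ u₀) := (sup_inf_left _ _ _).symm
            _ = z := by rw [inf_comm, h3, sup_bot_eq]
      infClosed' := by
        intro b hb b' hb' z hz
        rw [Set.mem_setOf_eq] at hb hb'
        rw [map_inf] at hz
        obtain ⟨s, hs1, hs2⟩ := hb z (hz.trans (sup_le_sup_right inf_le_left z))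
        obtain ⟨t, ht1, ht2⟩ := hb' z (hz.trans (sup_le_sup_right inf_le_right z))
        refine ⟨s ⊔ t, ?_, ?_⟩
        · calc a ≤ (b ⊔ (s ⊔ t)) ⊓ (b' ⊔ (s ⊔ t)) :=
              le_inf (hs1.trans (sup_le_sup_left le_sup_left b))
                (ht1.trans (sup_le_sup_left le_sup_right b'))
            _ = (b ⊓ b') ⊔ (s ⊔ t) := (sup_inf_right _ _ _).symm
        · rw [map_sup]; exact sup_le hs2 ht2 } (fun g hg => step1 a g hg)
  exact this b
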